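/- Let Q be a finite abelian group of order p^m equipped with an alternating bilinear form β : Q × Q → ℤ/p^e. Then Q contains an isotropic subgroup of index at most p^{⌊m/2⌋}. -/

import Mathlib

lemma lemA {p : ℕ} (hp : p.Prime) (e k : ℕ) :
    Nat.card {a : ZMod (p ^ e) // p ^ k • a = 0} ≤ p ^ k := by
  haveI : NeZero (p ^ e) := ⟨pow_ne_zero e hp.ne_zero⟩
  set g := e - k with hg
  have hzero : ∀ n : ℕ, p ^ e ∣ n → ((n : ℕ) : ZMod (p ^ e)) = 0 := fun n h =>
    (ZMod.natCast_eq_zero_iff n _).mpr h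
  have hmem : ∀ j : ℕ, p ^ k • ((p ^ g * j : ℕ) : ZMod (p ^ e)) = 0 := by
    intro j
    rw [nsmul_eq_mul, ← Nat.cast_mul]
    apply hzero
    rw [← mul_assoc, ← pow_add]
    exact dvd_mul_of_dvd_left (pow_dvd_pow p (by omega)) j
  have hsurj : Function.Surjective (fun j : Fin (p ^ k) =>
      (⟨((p ^ g * (j : ℕ) : ℕ) : ZMod (p ^ e)), hmem j⟩ :
        {a : ZMod (p ^ e) // p ^ k • a = 0})) := by
    rintro ⟨a, ha⟩
    set n := a.val with hn
    have hlt : n < p ^ e := ZMod.val_lt a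
    have hcast : ((n : ℕ) : ZMod (p ^ e)) = a := ZMod.natCast_zmod_val a
    have hdvd : p ^ g ∣ n := by
      rcases le_or_gt k e with hke | hke
      · have h0 : ((p ^ k * n : ℕ) : ZMod (p ^ e)) = 0 := by
          rw [Nat.cast_mul, hcast, ← nsmul_eq_mul]; exact ha
        have := (ZMod.natCast_eq_zero_iff _ _).mp h0
        have hee : p ^ e = p ^ k * p ^ g := by rw [← pow_add]; congr 1; omega
        rw [hee] at this
        exact (mul_dvd_mul_iff_left (pow_ne_zero k hp.ne_zero)).mp this
      · simp [hg, Nat.sub_eq_zero_of_le (le_of_lt hke)]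
    obtain ⟨j, hj⟩ := hdvd
    have hjlt : j < p ^ k := by
      have h1 : p ^ g * j < p ^ e := hj ▸ hlt
      have hge : p ^ e ≤ p ^ g * p ^ k := by
        rw [← pow_add]; exact Nat.pow_le_pow_right hp.pos (by omega)
      by_contra hc
      push_neg at hc
      have := Nat.mul_le_mul_left (p ^ g) hc
      have hpg : 0 < p ^ g := pow_pos hp.pos g
      omega
    exact ⟨⟨j, hjlt⟩, by ext; simp only; rw [← hj, hcast]⟩
  calc Nat.card {a : ZMod (p ^ e) // p ^ k • a = 0}
      ≤ Nat.card (Fin (p ^ k)) := Nat.card_le_card_of_surjective _ hsurj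
    _ = p ^ k := by simp

universe u

lemma auxmain (p : ℕ) (hp : p.Prime) (e : ℕ) :
    ∀ (m : ℕ) (Q : Type u) [CommGroup Q] [Finite Q],
    Nat.card Q = p ^ m →
    ∀ β : Q → Q → ZMod (p ^ e),
      (∀ x y z : Q, β (x * y) z = β x z + β y z) →
      (∀ x y z : Q, β x (y * z) = β x y + β x z) →
      (∀ x : Q, β x x = 0) →
      ∃ I : Subgroup Q, (∀ x ∈ I, ∀ y ∈ I, β x y = 0) ∧ I.index ≤ p ^ (m / 2) := by
  intro m
  induction m using Nat.strong_induction_on with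
  | _ m IH =>
  intro Q _ _ hQ β hbl hbr halt
  haveI : NeZero (p ^ e) := ⟨pow_ne_zero e hp.ne_zero⟩
  by_cases hzero : ∀ u v : Q, β u v = 0
  · exact ⟨⊤, fun a _ b _ => hzero a b, by
      rw [Subgroup.index_top]; exact Nat.one_le_pow _ _ hp.pos⟩
  push_neg at hzero
  obtain ⟨x₀, y₀, hx₀⟩ := hzero
  -- basic identities
  have hskew : ∀ u v : Q, β v u = - β u v := by
    intro u v
    have h := halt (u * v)
    rw [hbl, hbr, hbr, halt, halt] at h
    linear_combination h
  have hzpow : ∀ (u z : Q) (n : ℤ), β u (z ^ n) = n • β u z := by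
    intro u z n
    have h := map_zpow (MonoidHom.mk' (fun w => Multiplicative.ofAdd (β u w))
      (fun a b => by
        show Multiplicative.ofAdd (β u (a * b)) =
          Multiplicative.ofAdd (β u a) * Multiplicative.ofAdd (β u b)
        rw [hbr]; rfl)) z n
    simpa using congrArg Multiplicative.toAdd h
  have hzpow_l : ∀ (z w : Q) (n : ℤ), β (z ^ n) w = n • β z w := by
    intro z w n
    rw [hskew w (z ^ n), hzpow, hskew z w]
    simp
  -- choose maximal order pair
  obtain ⟨⟨x, y⟩, hmax⟩ := Finite.exists_max (fun pr : Q × Q => addOrderOf (β pr.1 pr.2))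
  have hc : β x y ≠ 0 := by
    intro h
    have h1 := hmax (x₀, y₀)
    rw [h, addOrderOf_zero] at h1
    exact hx₀ (AddMonoid.addOrderOf_eq_one_iff.mp (le_antisymm h1 (addOrderOf_pos _)))
  obtain ⟨k, hk_le, hck⟩ := (Nat.dvd_prime_pow hp).mp
    (show addOrderOf (β x y) ∣ p ^ e by
      have h := addOrderOf_dvd_card (x := β x y); rwa [ZMod.card] at h)
  have hkill : ∀ z w : Q, p ^ k • β z w = 0 := by
    intro z w
    rw [← addOrderOf_dvd_iff_nsmul_eq_zero]
    obtain ⟨j, hj_le, hj⟩ := (Nat.dvd_prime_pow hp).mp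
      (show addOrderOf (β z w) ∣ p ^ e by
        have h := addOrderOf_dvd_card (x := β z w); rwa [ZMod.card] at h)
    rw [hj]
    apply pow_dvd_pow
    have := hmax (z, w)
    rw [hck, hj] at this
    exact (Nat.pow_le_pow_iff_right hp.one_lt).mp this
  -- the subgroup N
  set Φ : Q →* Multiplicative (ZMod (p ^ e) × ZMod (p ^ e)) :=
    MonoidHom.mk' (fun z => Multiplicative.ofAdd (β x z, β y z))
      (fun a b => by
        show Multiplicative.ofAdd (β x (a * b), β y (a * b)) =
          Multiplicative.ofAdd (β x a, β y a) * Multiplicative.ofAdd (β x b, β y b)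
        rw [hbr x a b, hbr y a b]; rfl) with hΦ
  set N := Φ.ker with hN
  have memN : ∀ z : Q, z ∈ N ↔ β x z = 0 ∧ β y z = 0 := by
    intro z
    rw [hN, MonoidHom.mem_ker]
    constructor
    · intro h
      have h2 := congrArg Multiplicative.toAdd h
      exact ⟨congrArg Prod.fst h2, congrArg Prod.snd h2⟩
    · rintro ⟨h1, h2⟩
      show Multiplicative.ofAdd (β x z, β y z) = 1
      rw [h1, h2]; rfl
  -- index of N is at most p ^ (2k)
  have hprop : ∀ zb : Q ⧸ N,
      p ^ k • (Multiplicative.toAdd (QuotientGroup.kerLift Φ zb)).1 = 0 ∧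
      p ^ k • (Multiplicative.toAdd (QuotientGroup.kerLift Φ zb)).2 = 0 := by
    intro zb
    induction zb using QuotientGroup.induction_on with
    | _ z =>
      rw [QuotientGroup.kerLift_mk]
      exact ⟨hkill x z, hkill y z⟩
  have hinj : Function.Injective (fun zb : Q ⧸ N =>
      ((⟨_, (hprop zb).1⟩, ⟨_, (hprop zb).2⟩) :
        {a : ZMod (p ^ e) // p ^ k • a = 0} × {a : ZMod (p ^ e) // p ^ k • a = 0})) := by
    intro a b hab
    apply QuotientGroup.kerLift_injective Φ
    apply Multiplicative.toAdd.injective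
    simp only [Prod.mk.injEq, Subtype.mk.injEq] at hab
    exact Prod.ext hab.1 hab.2
  have hindexN : N.index ≤ p ^ (2 * k) :=
    calc N.index = Nat.card (Q ⧸ N) := rfl
      _ ≤ Nat.card ({a : ZMod (p ^ e) // p ^ k • a = 0} ×
            {a : ZMod (p ^ e) // p ^ k • a = 0}) := Nat.card_le_card_of_injective _ hinj
      _ = Nat.card {a : ZMod (p ^ e) // p ^ k • a = 0} *
            Nat.card {a : ZMod (p ^ e) // p ^ k • a = 0} := Nat.card_prod _ _
      _ ≤ p ^ k * p ^ k := Nat.mul_le_mul (lemA hp e k) (lemA hp e k)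
      _ = p ^ (2 * k) := by rw [← pow_add]; ring_nf
  -- card of N
  obtain ⟨m', hm'_le, hcardN⟩ := (Nat.dvd_prime_pow hp).mp
    (show Nat.card N ∣ p ^ m from hQ ▸ Subgroup.card_subgroup_dvd_card N)
  have hm'lt : m' < m := by
    rcases lt_or_eq_of_le hm'_le with h | h
    · exact h
    · exfalso
      have htop : N = ⊤ := Subgroup.eq_top_of_card_eq N (by rw [hcardN, hQ, h])
      have hy : y ∈ N := by rw [htop]; exact Subgroup.mem_top y
      exact hc ((memN y).mp hy).1
  obtain ⟨I', hI'iso, hI'ind⟩ := IH m' hm'lt ↥N hcardN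
    (fun a b => β ↑a ↑b) (fun a b c => hbl ↑a ↑b ↑c) (fun a b c => hbr ↑a ↑b ↑c)
    (fun a => halt ↑a)
  set I'' := I'.map N.subtype with hI''
  set J := I'' ⊔ Subgroup.zpowers x with hJ
  have hI''N : I'' ≤ N := Subgroup.map_subtype_le I'
  have hJiso : ∀ u ∈ J, ∀ w ∈ J, β u w = 0 := by
    intro u hu w hw
    rw [hJ, Subgroup.mem_sup] at hu hw
    obtain ⟨a, ha, xa, hxa, rfl⟩ := hu
    obtain ⟨b, hb, xb, hxb, rfl⟩ := hw
    obtain ⟨i, rfl⟩ := Subgroup.mem_zpowers_iff.mp hxa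
    obtain ⟨j, rfl⟩ := Subgroup.mem_zpowers_iff.mp hxb
    have haN := (memN a).mp (hI''N ha)
    have hbN := (memN b).mp (hI''N hb)
    have hab : β a b = 0 := by
      rw [hI'', Subgroup.mem_map] at ha hb
      obtain ⟨a', ha', rfl⟩ := ha
      obtain ⟨b', hb', rfl⟩ := hb
      exact hI'iso a' ha' b' hb'
    have h2 : β a (x ^ j) = 0 := by
      rw [hzpow, hskew x, haN.1, neg_zero, smul_zero]
    have h3 : β (x ^ i) b = 0 := by
      rw [hzpow_l, hbN.1, smul_zero]
    have h4 : β (x ^ i) (x ^ j) = 0 := by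
      rw [hzpow_l, hzpow, halt, smul_zero, smul_zero]
    rw [hbl, hbr, hbr, hab, h2, h3, h4]
    ring
  have hxN : ∀ i : ℤ, x ^ i ∈ N → ((p ^ k : ℕ) : ℤ) ∣ i := by
    intro i hi
    have h := ((memN _).mp hi).2
    rw [hzpow, hskew x y, smul_neg, neg_eq_zero] at h
    have h2 := addOrderOf_dvd_iff_zsmul_eq_zero.mpr h
    rwa [hck] at h2
  have hmemJ1 : ∀ a : ↥I'', (a : Q) ∈ J := fun a => (le_sup_left : I'' ≤ J) a.2
  have hmemJ2 : ∀ n : ℕ, x ^ n ∈ J :=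
    fun n => pow_mem ((le_sup_right : Subgroup.zpowers x ≤ J) (Subgroup.mem_zpowers x)) n
  have hinj2 : Function.Injective (fun ab : ↥I'' × Fin (p ^ k) =>
      (⟨(ab.1 : Q) * x ^ ((ab.2 : ℕ)), mul_mem (hmemJ1 ab.1) (hmemJ2 ab.2)⟩ : ↥J)) := by
    rintro ⟨a, n1⟩ ⟨b, n2⟩ hab
    simp only [Subtype.mk.injEq] at hab
    have h2 : x ^ ((n2 : ℕ)) * (x ^ ((n1 : ℕ)))⁻¹ = (b : Q)⁻¹ * ↑a :=
      mul_right_cancel (b := x ^ ((n1 : ℕ))) (by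
        rw [inv_mul_cancel_right, mul_assoc, hab, ← mul_assoc, inv_mul_cancel, one_mul])
    have hdvd := hxN (((n2 : ℕ) : ℤ) - ((n1 : ℕ) : ℤ)) (by
      rw [zpow_sub, zpow_natCast, zpow_natCast, h2]
      exact hI''N (mul_mem (inv_mem b.2) a.2))
    have hdiff : ((n2 : ℕ) : ℤ) - ((n1 : ℕ) : ℤ) = 0 := by
      refine Int.eq_zero_of_abs_lt_dvd hdvd ?_
      have hb1 := n1.2
      have hb2 := n2.2
      rw [abs_lt]
      omega
    have hn : n1 = n2 := by
      have : (n1 : ℕ) = (n2 : ℕ) := by omega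
      exact Fin.ext this
    subst hn
    have hae : (a : Q) = b := mul_right_cancel hab
    exact Prod.ext (Subtype.ext hae) rfl
  have hcardI''_eq : Nat.card ↥I'' = Nat.card ↥I' :=
    Nat.card_congr (Subgroup.equivMapOfInjective I' N.subtype N.subtype_injective).toEquiv.symm
  have hcardI' : p ^ (m' - m' / 2) ≤ Nat.card ↥I' := by
    have h := Subgroup.card_mul_index I'
    rw [hcardN] at h
    refine Nat.le_of_mul_le_mul_right ?_ (pow_pos hp.pos (m' / 2))
    calc p ^ (m' - m' / 2) * p ^ (m' / 2) = p ^ m' := by rw [← pow_add]; congr 1; omega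
      _ = Nat.card ↥I' * I'.index := h.symm
      _ ≤ Nat.card ↥I' * p ^ (m' / 2) := Nat.mul_le_mul_left _ hI'ind
  have hcardJ : p ^ (m' - m' / 2) * p ^ k ≤ Nat.card ↥J := by
    calc p ^ (m' - m' / 2) * p ^ k ≤ Nat.card ↥I'' * p ^ k :=
          Nat.mul_le_mul_right _ (hcardI''_eq ▸ hcardI')
      _ = Nat.card (↥I'' × Fin (p ^ k)) := by rw [Nat.card_prod]; simp
      _ ≤ Nat.card ↥J := Nat.card_le_card_of_injective _ hinj2
  have hJcard_index := Subgroup.card_mul_index J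
  rw [hQ] at hJcard_index
  have hmain : J.index * (p ^ (m' - m' / 2) * p ^ k) ≤ p ^ m := by
    calc J.index * (p ^ (m' - m' / 2) * p ^ k) ≤ J.index * Nat.card ↥J :=
          Nat.mul_le_mul_left _ hcardJ
      _ = p ^ m := by rw [mul_comm]; exact hJcard_index
  rw [← pow_add] at hmain
  set c0 := m' - m' / 2 + k with hc0
  have hJpos : J.index ≠ 0 := Subgroup.index_ne_zero_of_finite
  have hc0m : c0 ≤ m := by
    have hle : p ^ c0 ≤ p ^ m :=
      le_trans (Nat.le_mul_of_pos_left _ (Nat.pos_of_ne_zero hJpos)) hmain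
    exact (Nat.pow_le_pow_iff_right hp.one_lt).mp hle
  have hJle : J.index ≤ p ^ (m - c0) := by
    refine Nat.le_of_mul_le_mul_right ?_ (pow_pos hp.pos c0)
    calc J.index * p ^ c0 ≤ p ^ m := hmain
      _ = p ^ (m - c0) * p ^ c0 := by rw [← pow_add]; congr 1; omega
  have hNdvd : N.index * p ^ m' = p ^ m := by
    have h := Subgroup.card_mul_index N
    rw [hcardN, hQ] at h
    rw [mul_comm]
    exact h
  have hm2k : m ≤ 2 * k + m' := by
    have hle : p ^ m ≤ p ^ (2 * k + m') := by
      rw [← hNdvd, pow_add]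
      exact Nat.mul_le_mul_right _ hindexN
    exact (Nat.pow_le_pow_iff_right hp.one_lt).mp hle
  refine ⟨J, hJiso, le_trans hJle (Nat.pow_le_pow_right hp.pos ?_)⟩
  omega

/-- A finite abelian group `Q` of order `p^m` with an alternating biadditive
form `β : Q × Q → ℤ/p^e` contains an isotropic subgroup of index at most
`p^⌊m/2⌋`. -/
theorem stmt10 {p : ℕ} (hp : p.Prime) {Q : Type*} [CommGroup Q] [Finite Q]
    (m e : ℕ) (hQ : Nat.card Q = p ^ m)
    (β : Q → Q → ZMod (p ^ e))
    (hbiadd_left : ∀ x y z : Q, β (x * y) z = β x z + β y z)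
    (hbiadd_right : ∀ x y z : Q, β x (y * z) = β x y + β x z)
    (halt : ∀ x : Q, β x x = 0) :
    ∃ I : Subgroup Q, (∀ x ∈ I, ∀ y ∈ I, β x y = 0) ∧ I.index ≤ p ^ (m / 2) :=
  auxmain p hp e m Q hQ β hbiadd_left hbiadd_right halt
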